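/- Let i ∈ {1,2} with m_i ≠ m0 and d_{i0} = ‖m_i − m0‖. Define C₀⁻ = {(x, s) ∈ ℝ² × ℝ : ‖x − m0‖² = s², s ≤ 0} and, for t_i ∈ ℝ, the plane Π_i(t_i) = {(x, s) ∈ ℝ² × ℝ : ⟨m_i − m0, x − m0⟩ − t_i·s = (d_{i0}² − t_i²)/2}, and let π(x, s) = x. Then: if −d_{i0} < t_i ≤ d_{i0}, π(C₀⁻ ∩ Π_i(t_i)) = A_i(t_i); and if t_i = −d_{i0}, π(C₀⁻ ∩ Π_i(t_i)) = A_i(−d_{i0}) ∪ [m0, m_i], where [m0, m_i] is the closed segment joining m0 and m_i. -/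

import Mathlib

private lemma inner_key (m0 mi x : EuclideanSpace ℝ (Fin 2)) :
    (inner ℝ (mi - m0) (x - m0) : ℝ)
      = (‖x - m0‖ ^ 2 + ‖mi - m0‖ ^ 2 - ‖x - mi‖ ^ 2) / 2 := by
  have h : x - mi = (x - m0) - (mi - m0) := by abel
  have := @norm_sub_sq_real (EuclideanSpace ℝ (Fin 2)) _ _ (x - m0) (mi - m0)
  rw [← h] at this
  have hc : (inner ℝ (x - m0) (mi - m0) : ℝ) = inner ℝ (mi - m0) (x - m0) :=
    real_inner_comm _ _
  rw [hc] at this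
  linarith

private lemma mem_image_iff (m0 mi : EuclideanSpace ℝ (Fin 2)) (ti : ℝ)
    (x : EuclideanSpace ℝ (Fin 2)) :
    (x ∈ (fun X : EuclideanSpace ℝ (Fin 2) × ℝ => X.1) ''
        ({X : EuclideanSpace ℝ (Fin 2) × ℝ | ‖X.1 - m0‖ ^ 2 = X.2 ^ 2 ∧ X.2 ≤ 0} ∩
         {X : EuclideanSpace ℝ (Fin 2) × ℝ |
           (inner ℝ (mi - m0) (X.1 - m0) : ℝ) - ti * X.2 = (‖mi - m0‖ ^ 2 - ti ^ 2) / 2}))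
    ↔ (‖x - m0‖ + ti) ^ 2 = ‖x - mi‖ ^ 2 := by
  constructor
  · rintro ⟨⟨y, s⟩, ⟨⟨h1, h2⟩, h3⟩, rfl⟩
    simp only at h1 h2 h3 ⊢
    have hs : s = -‖y - m0‖ := by
      have hf : (s + ‖y - m0‖) * (s - ‖y - m0‖) = 0 := by nlinarith
      rcases mul_eq_zero.mp hf with h | h
      · linarith
      · have := norm_nonneg (y - m0); linarith
    simp only [Set.mem_setOf_eq] at h3
    rw [inner_key, hs] at h3
    linear_combination 2 * h3
  · intro h
    refine ⟨(x, -‖x - m0‖), ⟨⟨by ring, by simp [norm_nonneg]⟩, ?_⟩, rfl⟩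
    simp only [Set.mem_setOf_eq]
    rw [inner_key]
    nlinarith

private lemma seg_iff (m0 mi x : EuclideanSpace ℝ (Fin 2)) :
    x ∈ segment ℝ m0 mi ↔ ‖x - m0‖ + ‖x - mi‖ = ‖mi - m0‖ := by
  rw [mem_segment_iff_wbtw, ← dist_add_dist_eq_iff]
  simp only [dist_eq_norm]
  rw [norm_sub_rev m0 x, norm_sub_rev m0 mi]

theorem stmt4 (m0 mi : EuclideanSpace ℝ (Fin 2)) (hne : mi ≠ m0) (ti : ℝ)
    (C0neg : Set (EuclideanSpace ℝ (Fin 2) × ℝ))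
    (hC0 : C0neg = {X : EuclideanSpace ℝ (Fin 2) × ℝ | ‖X.1 - m0‖ ^ 2 = X.2 ^ 2 ∧ X.2 ≤ 0})
    (Pi : Set (EuclideanSpace ℝ (Fin 2) × ℝ))
    (hPi : Pi = {X : EuclideanSpace ℝ (Fin 2) × ℝ |
      (inner ℝ (mi - m0) (X.1 - m0) : ℝ) - ti * X.2 = (‖mi - m0‖ ^ 2 - ti ^ 2) / 2}) :
    (-‖mi - m0‖ < ti ∧ ti ≤ ‖mi - m0‖ →
      (fun X : EuclideanSpace ℝ (Fin 2) × ℝ => X.1) '' (C0neg ∩ Pi) =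
        {x : EuclideanSpace ℝ (Fin 2) | ‖x - mi‖ - ‖x - m0‖ = ti}) ∧
    (ti = -‖mi - m0‖ →
      (fun X : EuclideanSpace ℝ (Fin 2) × ℝ => X.1) '' (C0neg ∩ Pi) =
        {x : EuclideanSpace ℝ (Fin 2) | ‖x - mi‖ - ‖x - m0‖ = -‖mi - m0‖} ∪
          segment ℝ m0 mi) := by
  subst hC0 hPi
  have htri : ∀ x : EuclideanSpace ℝ (Fin 2), ‖mi - m0‖ ≤ ‖x - m0‖ + ‖x - mi‖ := by
    intro x
    have := norm_sub_le (x - m0) (x - mi)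
    have h : (x - m0) - (x - mi) = mi - m0 := by abel
    rwa [h] at this
  constructor
  · rintro ⟨h1, h2⟩
    ext x
    rw [mem_image_iff m0 mi ti x]
    simp only [Set.mem_setOf_eq]
    constructor
    · intro h
      have hf : (‖x - m0‖ + ti - ‖x - mi‖) * (‖x - m0‖ + ti + ‖x - mi‖) = 0 := by nlinarith
      rcases mul_eq_zero.mp hf with h | h
      · linarith
      · nlinarith [htri x, norm_nonneg (x - mi), norm_nonneg (x - m0)]
    · intro h
      linear_combination (-(‖x - m0‖ + ti + ‖x - mi‖)) * h
  · rintro rfl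
    ext x
    rw [mem_image_iff m0 mi _ x]
    simp only [Set.mem_union, Set.mem_setOf_eq, seg_iff m0 mi x]
    constructor
    · intro h
      have hf : (‖x - m0‖ + -‖mi - m0‖ - ‖x - mi‖) * (‖x - m0‖ + -‖mi - m0‖ + ‖x - mi‖) = 0 := by
        nlinarith
      rcases mul_eq_zero.mp hf with h | h
      · left; linarith
      · right; linarith
    · rintro (h | h)
      · linear_combination (-(‖x - m0‖ + -‖mi - m0‖ + ‖x - mi‖)) * h
      · linear_combination (‖x - m0‖ - ‖mi - m0‖ - ‖x - mi‖) * h
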